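/- For all m, n ≥ 1, k ≥ 0 and every pair (Λ,P) ∈ U_{m,n}^(k) with Λ = [λ₀,…,λ_{m−1}] and P = [ρ₀,…,ρ_{n−1}]: the sets λ₀,…,λ_{m−1} are pairwise disjoint, the sets ρ₀,…,ρ_{n−1} are pairwise disjoint, and λ₀ ∪ … ∪ λ_{m−1} = ρ₀ ∪ … ∪ ρ_{n−1} = {1,…,2^k}. -/

import Mathlib

open Finset

/-- `Π·h`: the vector whose `q`-th entry is the union of the `Π p` over all `p` with `h p = q`. -/
def dotAct {n : ℕ} (Pi : Fin n → Finset ℕ) (h : Fin n → Fin n) : Fin n → Finset ℕ :=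
  fun q => (Finset.univ.filter (fun p => h p = q)).biUnion Pi

/-- Entrywise union of two vectors of sets. -/
def vUnion {n : ℕ} (Pi Pi' : Fin n → Finset ℕ) : Fin n → Finset ℕ :=
  fun q => Pi q ∪ Pi' q

/-- `r = max (π₀ ∪ … ∪ π_{n−1})`. -/
def vMax {n : ℕ} (Pi : Fin n → Finset ℕ) : ℕ :=
  (Finset.univ.sup Pi).sup id

/-- `Π↑`: add `r = max (π₀ ∪ … ∪ π_{n−1})` to every element of every entry. -/
def vUp {n : ℕ} (Pi : Fin n → Finset ℕ) : Fin n → Finset ℕ :=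
  fun q => (Pi q).image (· + vMax Pi)

/-- A `k`-EXPcomposition of size `n`: pairwise disjoint entries whose union is `{1,…,2^k}`. -/
def IsEXP {n : ℕ} (k : ℕ) (Pi : Fin n → Finset ℕ) : Prop :=
  (∀ p q : Fin n, p ≠ q → Disjoint (Pi p) (Pi q)) ∧
    Finset.univ.sup Pi = Finset.Icc 1 (2 ^ k)

/-- A `k`-Rvalid vector of size `n`. -/
def IsRvalid {n : ℕ} (k : ℕ) (ρ : Fin n → Finset ℕ) : Prop :=
  IsEXP k ρ ∧ (∀ p : Fin n, p.val = 0 → 1 ∈ ρ p) ∧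
    ∀ k' < k, ∀ i ∈ Finset.Icc 1 (2 ^ k'), ∀ j ∈ Finset.Icc 1 (2 ^ k'),
      (∃ α, i ∈ ρ α ∧ j ∈ ρ α) → ∃ β, i + 2 ^ k' ∈ ρ β ∧ j + 2 ^ k' ∈ ρ β

/-- A `k`-Lvalid vector of size `m`. -/
def IsLvalid {m : ℕ} (k : ℕ) (lam : Fin m → Finset ℕ) : Prop :=
  IsEXP k lam ∧ (∀ p : Fin m, p.val = 0 → 2 ^ k ∈ lam p) ∧
    ∀ k' < k, ∀ i ∈ Finset.Icc 1 (2 ^ k'), ∀ j ∈ Finset.Icc 1 (2 ^ k'),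
      (∃ α, 2 ^ k + 1 - i ∈ lam α ∧ 2 ^ k + 1 - j ∈ lam α) →
        ∃ β, 2 ^ k + 1 - (i + 2 ^ k') ∈ lam β ∧ 2 ^ k + 1 - (j + 2 ^ k') ∈ lam β

/-- Number of nonempty entries of a vector of sets. -/
def nne {n : ℕ} (Pi : Fin n → Finset ℕ) : ℕ :=
  (Finset.univ.filter (fun q => Pi q ≠ ∅)).card

/-- `succ(P) = {P ∪ (P·g)↑ : g}`. -/
def succSet {n : ℕ} (P : Fin n → Finset ℕ) : Finset (Fin n → Finset ℕ) :=
  (Finset.univ : Finset (Fin n → Fin n)).image (fun g => vUnion P (vUp (dotAct P g)))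

/-- The graded set `U_{m,n}^{(k)}` of U-pairs. -/
def Uset (m n : ℕ) : ℕ → Set ((Fin m → Finset ℕ) × (Fin n → Finset ℕ))
  | 0 => {x | x = (fun p => if p.val = 0 then {1} else ∅,
                   fun q => if q.val = 0 then {1} else ∅)}
  | k + 1 => {x | ∃ L P, (L, P) ∈ Uset m n k ∧ ∃ (f : Fin m → Fin m) (g : Fin n → Fin n),
      x = (vUnion (dotAct L f) (vUp L), vUnion P (vUp (dotAct P g)))}

/-- The `r`-Stirling number: partitions of `{1,…,a}` into `b` nonempty blocks
with `1,…,r` in pairwise distinct blocks. -/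
noncomputable def rStirling (a b r : ℕ) : ℕ :=
  Set.ncard {C : Finset (Finset ℕ) |
    C.card = b ∧ (∅ ∉ C) ∧
    (∀ B ∈ C, ∀ B' ∈ C, B ≠ B' → Disjoint B B') ∧
    C.sup id = Finset.Icc 1 a ∧
    ∀ x ∈ Finset.Icc 1 r, ∀ y ∈ Finset.Icc 1 r, x ≠ y →
      ∀ B ∈ C, x ∈ B → y ∉ B}

/-- The Stirling number of the second kind: the number of partitions of an
`a`-element set into `b` nonempty blocks. -/
noncomputable def stirling2 (a b : ℕ) : ℕ := rStirling a b 0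

/-- The entry `s_n^{(i,j)}` (with `1 ≤ i,j ≤ n`). -/
noncomputable def sEntry (n i j : ℕ) : ℕ :=
  if i ≤ j then
    (j - i).factorial * Nat.choose (n - i) (j - i) *
      ∑ α ∈ Finset.Icc (j - i) i, Nat.choose i α * i ^ (i - α) * stirling2 α (j - i)
  else 0

/-- The matrix `S_n`, with rows and columns indexed by `{1,…,n}`. -/
noncomputable def Smat (n : ℕ) : Matrix (Fin n) (Fin n) ℕ :=
  fun i j => sEntry n (i.val + 1) (j.val + 1)

/-- One step of the shuffle-automaton action on subsets of the grid. -/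
def stepE {m n : ℕ} (E : Finset (Fin m × Fin n)) (f : Fin m → Fin m) (g : Fin n → Fin n) :
    Finset (Fin m × Fin n) :=
  E.image (fun p => (f p.1, p.2)) ∪ E.image (fun p => (p.1, g p.2))

/-- Reachability from `{(0,0)}` by finitely many steps. -/
def Reach {m n : ℕ} (hm : 0 < m) (hn : 0 < n) (E : Finset (Fin m × Fin n)) : Prop :=
  Relation.ReflTransGen (fun E1 E2 => ∃ f g, E2 = stepE E1 f g)
    {(⟨0, hm⟩, ⟨0, hn⟩)} E

/-- Reachability from `{(0,0)}` in at most `t` steps. -/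
def ReachIn {m n : ℕ} (hm : 0 < m) (hn : 0 < n) :
    ℕ → Finset (Fin m × Fin n) → Prop
  | 0, E => E = {(⟨0, hm⟩, ⟨0, hn⟩)}
  | t + 1, E => ReachIn hm hn t E ∨
      ∃ E' f g, ReachIn hm hn t E' ∧ E = stepE E' f g

/-- `s(Λ,P) = {(i,j) : λ_i ∩ ρ_j ≠ ∅}`. -/
def sTab {m n : ℕ} (L : Fin m → Finset ℕ) (P : Fin n → Finset ℕ) :
    Finset (Fin m × Fin n) :=
  Finset.univ.filter (fun p => (L p.1 ∩ P p.2).Nonempty)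

lemma mem_sup_dotAct {n : ℕ} (Pi : Fin n → Finset ℕ) (g : Fin n → Fin n) (x : ℕ) :
    x ∈ Finset.univ.sup (dotAct Pi g) ↔ x ∈ Finset.univ.sup Pi := by
  simp only [Finset.mem_sup, dotAct, Finset.mem_biUnion, Finset.mem_filter, Finset.mem_univ,
    true_and]
  constructor
  · rintro ⟨q, p, _, hx⟩; exact ⟨p, hx⟩
  · rintro ⟨p, hx⟩; exact ⟨g p, p, rfl, hx⟩

lemma isEXP_dotAct {n k : ℕ} {Pi : Fin n → Finset ℕ} (h : IsEXP k Pi) (g : Fin n → Fin n) :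
    IsEXP k (dotAct Pi g) := by
  obtain ⟨hd, hs⟩ := h
  constructor
  · intro p q hpq
    rw [Finset.disjoint_left]
    intro x hx hx'
    simp only [dotAct, Finset.mem_biUnion, Finset.mem_filter, Finset.mem_univ, true_and] at hx hx'
    obtain ⟨a, ha, hax⟩ := hx
    obtain ⟨b, hb, hbx⟩ := hx'
    rcases eq_or_ne a b with rfl | hab
    · exact hpq (ha ▸ hb ▸ rfl)
    · exact (Finset.disjoint_left.1 (hd a b hab)) hax hbx
  · rw [← hs]; ext x; exact mem_sup_dotAct Pi g x

lemma vMax_of_isEXP {n k : ℕ} {Pi : Fin n → Finset ℕ} (h : IsEXP k Pi) :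
    vMax Pi = 2 ^ k := by
  rw [vMax, h.2]
  apply le_antisymm
  · exact Finset.sup_le fun x hx => (Finset.mem_Icc.1 hx).2
  · exact Finset.le_sup (f := id) (Finset.mem_Icc.2 ⟨Nat.one_le_two_pow, le_rfl⟩)

lemma isEXP_step {n k : ℕ} {A B : Fin n → Finset ℕ} (hA : IsEXP k A) (hB : IsEXP k B) :
    IsEXP (k + 1) (vUnion A (vUp B)) := by
  have hmB := vMax_of_isEXP hB
  have hAsub : ∀ p, ∀ x ∈ A p, x ∈ Finset.Icc 1 (2 ^ k) := by
    intro p x hx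
    rw [← hA.2]; exact Finset.mem_sup.2 ⟨p, Finset.mem_univ p, hx⟩
  have hBsub : ∀ p, ∀ x ∈ B p, x ∈ Finset.Icc 1 (2 ^ k) := by
    intro p x hx
    rw [← hB.2]; exact Finset.mem_sup.2 ⟨p, Finset.mem_univ p, hx⟩
  constructor
  · intro p q hpq
    rw [Finset.disjoint_left]
    intro x hx hx'
    simp only [vUnion, vUp, Finset.mem_union, Finset.mem_image, hmB] at hx hx'
    rcases hx with hx | ⟨a, ha, rfl⟩
    · rcases hx' with hx' | ⟨b, hb, hbe⟩
      · exact (Finset.disjoint_left.1 (hA.1 p q hpq)) hx hx'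
      · have := (Finset.mem_Icc.1 (hAsub p x hx)).2
        have := (Finset.mem_Icc.1 (hBsub q b hb)).1
        omega
    · rcases hx' with hx' | ⟨b, hb, hbe⟩
      · have := (Finset.mem_Icc.1 (hAsub q _ hx')).2
        have := (Finset.mem_Icc.1 (hBsub p a ha)).1
        omega
      · have hab : a = b := by omega
        subst hab
        exact (Finset.disjoint_left.1 (hB.1 p q hpq)) ha hb
  · ext x
    simp only [Finset.mem_sup, Finset.mem_univ, true_and, vUnion, vUp, Finset.mem_union,
      Finset.mem_image, hmB, Finset.mem_Icc]
    constructor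
    · rintro ⟨p, hx | ⟨a, ha, rfl⟩⟩
      · have := Finset.mem_Icc.1 (hAsub p x hx)
        have : (2:ℕ) ^ k ≤ 2 ^ (k + 1) := Nat.pow_le_pow_right (by norm_num) (by omega)
        omega
      · have := Finset.mem_Icc.1 (hBsub p a ha)
        have : 2 ^ k + 2 ^ k = 2 ^ (k + 1) := by ring
        omega
    · intro hx
      rcases le_or_gt x (2 ^ k) with hle | hlt
      · have : x ∈ Finset.Icc 1 (2 ^ k) := Finset.mem_Icc.2 ⟨hx.1, hle⟩
        rw [← hA.2] at this
        obtain ⟨p, _, hp⟩ := Finset.mem_sup.1 this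
        exact ⟨p, Or.inl hp⟩
      · have h2 : 2 ^ k + 2 ^ k = 2 ^ (k + 1) := by ring
        have : x - 2 ^ k ∈ Finset.Icc 1 (2 ^ k) := Finset.mem_Icc.2 ⟨by omega, by omega⟩
        rw [← hB.2] at this
        obtain ⟨p, _, hp⟩ := Finset.mem_sup.1 this
        exact ⟨p, Or.inr ⟨x - 2 ^ k, hp, by omega⟩⟩

lemma isEXP_of_Uset {m n k : ℕ} (hm : 0 < m) (hn : 0 < n) {L : Fin m → Finset ℕ}
    {P : Fin n → Finset ℕ}
    (h : (L, P) ∈ Uset m n k) : IsEXP k L ∧ IsEXP k P := by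
  induction k generalizing L P with
  | zero =>
    simp only [Uset, Set.mem_setOf_eq, Prod.mk.injEq] at h
    obtain ⟨hL, hP⟩ := h
    subst hL; subst hP
    have base : ∀ N : ℕ, 0 < N → IsEXP 0 (fun q : Fin N => if q.val = 0 then ({1} : Finset ℕ) else ∅) := by
      intro N hN
      constructor
      · intro p q hpq
        rw [Finset.disjoint_left]
        intro x hx hx'
        by_cases hp : p.val = 0 <;> by_cases hq : q.val = 0 <;>
          simp [hp, hq] at hx hx' <;> exact hpq (Fin.ext (by omega))
      · ext x
        simp only [Finset.mem_sup, Finset.mem_univ, true_and, pow_zero]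
        constructor
        · rintro ⟨p, hp⟩
          by_cases h0 : p.val = 0 <;> simp [h0] at hp
          simp [hp]
        · intro hx
          simp only [Finset.mem_Icc] at hx
          exact ⟨⟨0, hN⟩, by simp; omega⟩
    exact ⟨base m hm, base n hn⟩
  | succ k ih =>
    simp only [Uset, Set.mem_setOf_eq] at h
    obtain ⟨L0, P0, hmem, f, g, heq⟩ := h
    obtain ⟨hL0, hP0⟩ := ih hmem
    have h1 : L = vUnion (dotAct L0 f) (vUp L0) := congrArg Prod.fst heq
    have h2 : P = vUnion P0 (vUp (dotAct P0 g)) := congrArg Prod.snd heq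
    subst h1; subst h2
    exact ⟨isEXP_step (isEXP_dotAct hL0 f) hL0, isEXP_step hP0 (isEXP_dotAct hP0 g)⟩

theorem stmt5 (m n k : ℕ) (hm : 1 ≤ m) (hn : 1 ≤ n)
    (L : Fin m → Finset ℕ) (P : Fin n → Finset ℕ) (h : (L, P) ∈ Uset m n k) :
    (∀ p q : Fin m, p ≠ q → Disjoint (L p) (L q)) ∧
      (∀ p q : Fin n, p ≠ q → Disjoint (P p) (P q)) ∧
      Finset.univ.sup L = Finset.Icc 1 (2 ^ k) ∧
      Finset.univ.sup P = Finset.Icc 1 (2 ^ k) := by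
  obtain ⟨⟨hL1, hL2⟩, ⟨hP1, hP2⟩⟩ := isEXP_of_Uset hm hn h
  exact ⟨hL1, hP1, hL2, hP2⟩
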